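/- Let μ be a probability measure on ℝ^d × ℝ, let (X'₁,Y'₁),…,(X'_n,Y'_n),(X,Y) be i.i.d. with law μ, let G ⊆ [0,1] be a finite set with 0 ∈ G and |G| = K+1, and for each τ ∈ G let C_τ ⊆ ℝ^d × ℝ be a fixed measurable set with C₀ = ℝ^d × ℝ. Let α ∈ (0,1), let p̂(τ) = (1/n)·#{ i ≤ n : (X'ᵢ,Y'ᵢ) ∈ C_τ }, and let τ̂ = max{ τ ∈ G : p̂(τ) ≥ 1−α } (well-defined since p̂(0) = 1). Then for every ε > 0, P( μ(C_{τ̂}) ≤ 1 − α − ε ) ≤ K·exp(−2ε²n), where τ̂ is a random variable depending on (X'₁,Y'₁),…,(X'_n,Y'_n). -/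

import Mathlib

open MeasureTheory ProbabilityTheory

lemma hoeff_bernoulli (p : ℝ) (hp0 : 0 ≤ p) (hp1 : p ≤ 1) {t : ℝ} (ht : 0 ≤ t) :
    1 - p + p * Real.exp t ≤ Real.exp (p * t + t ^ 2 / 8) := by
  set D : ℝ → ℝ := fun s => 1 - p + p * Real.exp s with hD
  have hDpos : ∀ s, 0 < D s := by
    intro s
    rcases eq_or_lt_of_le hp1 with h | h
    · simp only [hD, ← h]
      have := Real.exp_pos s
      nlinarith
    · have h1 : 0 < 1 - p := by linarith
      have h2 : 0 ≤ p * Real.exp s := by positivity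
      simp only [hD]; nlinarith
  set g : ℝ → ℝ := fun s => p * Real.exp s / D s - p - s / 4 with hg
  set f : ℝ → ℝ := fun s => Real.log (D s) - p * s - s ^ 2 / 8 with hf
  have hDderiv : ∀ s, HasDerivAt D (p * Real.exp s) s := by
    intro s
    exact ((Real.hasDerivAt_exp s).const_mul p).const_add (1 - p)
  have hgderiv : ∀ s, HasDerivAt g
      (p * Real.exp s / D s * (1 - p * Real.exp s / D s) - 1 / 4) s := by
    intro s
    have h1 : HasDerivAt (fun s => p * Real.exp s / D s)
        ((p * Real.exp s * D s - p * Real.exp s * (p * Real.exp s)) / (D s) ^ 2) s :=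
      ((Real.hasDerivAt_exp s).const_mul p).div (hDderiv s) (hDpos s).ne'
    have h2 := (h1.sub_const p).sub ((hasDerivAt_id s).div_const 4)
    refine h2.congr_deriv ?_
    have := (hDpos s).ne'
    field_simp
  have hfderiv : ∀ s, HasDerivAt f (g s) s := by
    intro s
    have h1 : HasDerivAt (fun s => Real.log (D s)) (p * Real.exp s / D s) s :=
      (hDderiv s).log (hDpos s).ne'
    have h2 := (h1.sub ((hasDerivAt_id s).const_mul p)).sub
        ((hasDerivAt_pow 2 s).div_const 8)
    refine h2.congr_deriv ?_
    simp [hg]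
    ring
  have hg0 : g 0 = 0 := by simp [hg, hD]
  have hganti : AntitoneOn g (Set.Ici 0) := by
    apply antitoneOn_of_deriv_nonpos (convex_Ici 0)
    · exact fun x _ => (hgderiv x).continuousAt.continuousWithinAt
    · exact fun x _ => (hgderiv x).differentiableAt.differentiableWithinAt
    · intro x hx
      rw [(hgderiv x).deriv]
      nlinarith [sq_nonneg (p * Real.exp x / D x - 1/2)]
  have hgle : ∀ s ∈ Set.Ici (0:ℝ), g s ≤ 0 := by
    intro s hs
    have := hganti Set.self_mem_Ici hs hs
    rwa [hg0] at this
  have hfanti : AntitoneOn f (Set.Ici 0) := by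
    apply antitoneOn_of_deriv_nonpos (convex_Ici 0)
    · exact fun x _ => (hfderiv x).continuousAt.continuousWithinAt
    · exact fun x _ => (hfderiv x).differentiableAt.differentiableWithinAt
    · intro x hx
      rw [(hfderiv x).deriv]
      exact hgle x (le_of_lt (by simpa using hx))
  have hf0 : f 0 = 0 := by simp [hf, hD]
  have hft : f t ≤ 0 := by
    have := hfanti Set.self_mem_Ici ht ht
    rwa [hf0] at this
  have : Real.log (D t) ≤ p * t + t ^ 2 / 8 := by
    simp only [hf] at hft; linarith
  calc 1 - p + p * Real.exp t = D t := rfl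
    _ ≤ Real.exp (p * t + t ^ 2 / 8) := by
        rw [← Real.exp_log (hDpos t)]
        exact Real.exp_le_exp.mpr this

lemma bernoulli_tail {Ω : Type*} [MeasurableSpace Ω] (P : Measure Ω) [IsProbabilityMeasure P]
    {ι : Type*} (W : ι → Ω → ℝ) (hmeas : ∀ i, Measurable (W i))
    (hindep : iIndepFun W P)
    (s : Finset ι) (p : ℝ) (hp0 : 0 ≤ p) (hp1 : p ≤ 1)
    (hmgf : ∀ i ∈ s, ∀ t : ℝ, mgf (W i) P t = 1 - p + p * Real.exp t)
    (hint : ∀ i ∈ s, ∀ t : ℝ, Integrable (fun ω => Real.exp (t * W i ω)) P)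
    (ε : ℝ) (hε : 0 < ε) :
    (P {ω | (s.card : ℝ) * (p + ε) ≤ (∑ i ∈ s, W i) ω}).toReal ≤
      Real.exp (-2 * ε ^ 2 * s.card) := by
  set t : ℝ := 4 * ε with htdef
  have ht : 0 ≤ t := by positivity
  have hint_sum := hindep.integrable_exp_mul_sum hmeas (fun i hi => hint i hi t)
  have hch := measure_ge_le_exp_mul_mgf (μ := P) (X := ∑ i ∈ s, W i)
      ((s.card : ℝ) * (p + ε)) ht hint_sum
  rw [hindep.mgf_sum hmeas s] at hch
  have hprod : ∏ i ∈ s, mgf (W i) P t ≤ Real.exp (p * t + t ^ 2 / 8) ^ s.card := by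
    rw [← Finset.prod_const]
    apply Finset.prod_le_prod
    · intro i hi
      rw [hmgf i hi t]
      have h1 : (1:ℝ) ≤ Real.exp t := Real.one_le_exp ht
      nlinarith
    · intro i hi
      rw [hmgf i hi t]
      exact hoeff_bernoulli p hp0 hp1 ht
  calc (P {ω | (s.card : ℝ) * (p + ε) ≤ (∑ i ∈ s, W i) ω}).toReal
      ≤ Real.exp (-t * ((s.card : ℝ) * (p + ε))) * ∏ i ∈ s, mgf (W i) P t := hch
    _ ≤ Real.exp (-t * ((s.card : ℝ) * (p + ε))) * Real.exp (p * t + t ^ 2 / 8) ^ s.card := by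
        exact mul_le_mul_of_nonneg_left hprod (Real.exp_nonneg _)
    _ = Real.exp (-2 * ε ^ 2 * s.card) := by
        rw [← Real.exp_nat_mul, ← Real.exp_add]
        congr 1
        simp only [htdef]
        ring

/-- **PAV guarantee, fixed predictor.** With i.i.d. samples
`(X'₁,Y'₁),…,(X'ₙ,Y'ₙ),(X,Y)` of law `μ` on `ℝ^d × ℝ`, a finite grid
`G ⊆ [0,1]` with `0 ∈ G` and `|G| = K + 1`, fixed measurable regions `C_τ`
with `C₀` everything, empirical frequencies `p̂(τ)` computed from the first
`n` samples, and `τ̂ = max{τ ∈ G : p̂(τ) ≥ 1 - α}`, for every `ε > 0`,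
`P(μ(C_τ̂) ≤ 1 - α - ε) ≤ K·exp(-2ε²n)`. -/
theorem pav_guarantee_fixed_predictor
    {Ω : Type*} [MeasurableSpace Ω] (P : Measure Ω) [IsProbabilityMeasure P]
    (d n K : ℕ) (hn : 1 ≤ n)
    (μ : Measure ((Fin d → ℝ) × ℝ)) [IsProbabilityMeasure μ]
    (Z : Fin (n + 1) → Ω → (Fin d → ℝ) × ℝ)
    (hZmeas : ∀ i, Measurable (Z i))
    (hZindep : iIndepFun Z P)
    (hZlaw : ∀ i, P.map (Z i) = μ)
    (G : Finset ℝ) (hGsub : ↑G ⊆ Set.Icc (0 : ℝ) 1) (hG0 : (0 : ℝ) ∈ G)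
    (hGcard : G.card = K + 1)
    (C : ℝ → Set ((Fin d → ℝ) × ℝ))
    (hCmeas : ∀ τ ∈ G, MeasurableSet (C τ))
    (hC0 : C 0 = Set.univ)
    (α : ℝ) (hα : α ∈ Set.Ioo (0 : ℝ) 1)
    (phat : ℝ → Ω → ℝ)
    (hphat : phat = fun τ ω =>
      (({i : Fin n | Z i.castSucc ω ∈ C τ}).ncard : ℝ) / n)
    (τhat : Ω → ℝ)
    (hτhat : τhat = fun ω => sSup {τ : ℝ | τ ∈ G ∧ 1 - α ≤ phat τ ω})
    (ε : ℝ) (hε : 0 < ε) :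
    (P {ω | (μ (C (τhat ω))).toReal ≤ 1 - α - ε}).toReal ≤
      K * Real.exp (-2 * ε ^ 2 * n) := by
  classical
  obtain ⟨hα0, hα1⟩ := hα
  have hnpos : (0 : ℝ) < n := by exact_mod_cast hn
  -- phat as a sum of indicators
  have hphat_count : ∀ τ ω, phat τ ω =
      ((Finset.univ.filter (fun i : Fin n => Z i.castSucc ω ∈ C τ)).card : ℝ) / n := by
    intro τ ω
    simp only [hphat]
    congr 2
    rw [Set.ncard_eq_toFinset_card']
    congr 1
    ext i
    simp
  -- tauhat is a member of the feasible set
  have hτmem : ∀ ω, τhat ω ∈ G ∧ 1 - α ≤ phat (τhat ω) ω := by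
    intro ω
    have h0 : (0 : ℝ) ∈ {τ : ℝ | τ ∈ G ∧ 1 - α ≤ phat τ ω} := by
      refine ⟨hG0, ?_⟩
      rw [hphat_count]
      have : (Finset.univ.filter (fun i : Fin n => Z i.castSucc ω ∈ C 0)).card = n := by
        simp [hC0]
      rw [this, div_self hnpos.ne']
      linarith
    have hfin : {τ : ℝ | τ ∈ G ∧ 1 - α ≤ phat τ ω}.Finite :=
      G.finite_toSet.subset (fun τ hτ => hτ.1)
    have := Set.Nonempty.csSup_mem ⟨0, h0⟩ hfin
    rw [hτhat]
    exact this
  -- the bad grid points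
  set Gbad : Finset ℝ := G.filter (fun τ => (μ (C τ)).toReal ≤ 1 - α - ε) with hGbad
  have hGbadcard : Gbad.card ≤ K := by
    have h0notin : (0 : ℝ) ∉ Gbad := by
      simp only [hGbad, Finset.mem_filter, not_and]
      intro _
      rw [hC0]
      simp only [measure_univ, ENNReal.toReal_one]
      push_neg
      linarith
    have : Gbad ⊆ G.erase 0 := Finset.subset_erase.mpr ⟨Finset.filter_subset _ _, h0notin⟩
    calc Gbad.card ≤ (G.erase 0).card := Finset.card_le_card this
      _ = K := by rw [Finset.card_erase_of_mem hG0, hGcard]; rfl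
  -- event inclusion
  have hincl : {ω | (μ (C (τhat ω))).toReal ≤ 1 - α - ε} ⊆
      ⋃ τ ∈ Gbad, {ω | 1 - α ≤ phat τ ω} := by
    intro ω hω
    simp only [Set.mem_setOf_eq] at hω
    obtain ⟨hmem, hge⟩ := hτmem ω
    exact Set.mem_biUnion (Finset.mem_filter.mpr ⟨hmem, hω⟩) hge
  -- per-τ tail bound
  have hτbound : ∀ τ ∈ Gbad, (P {ω | 1 - α ≤ phat τ ω}).toReal ≤
      Real.exp (-2 * ε ^ 2 * n) := by
    intro τ hτ
    simp only [hGbad, Finset.mem_filter] at hτ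
    obtain ⟨hτG, hτbad⟩ := hτ
    set p : ℝ := (μ (C τ)).toReal with hp
    have hp0 : 0 ≤ p := ENNReal.toReal_nonneg
    have hp1 : p ≤ 1 := by
      rw [hp]
      exact ENNReal.toReal_le_of_le_ofReal one_pos.le (by simpa using prob_le_one)
    set W : Fin (n + 1) → Ω → ℝ := fun i ω => if Z i ω ∈ C τ then 1 else 0 with hW
    have hWmeas : ∀ i, Measurable (W i) := by
      intro i
      exact Measurable.ite ((hZmeas i) (hCmeas τ hτG)) measurable_const measurable_const
    have hWindep : iIndepFun W P := by
      have := hZindep.comp (fun _ => (fun z => if z ∈ C τ then (1:ℝ) else 0))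
        (fun _ => Measurable.ite (hCmeas τ hτG) measurable_const measurable_const)
      exact this
    have hWint : ∀ (i : Fin (n+1)) (t : ℝ),
        Integrable (fun ω => Real.exp (t * W i ω)) P := by
      intro i t
      have heq : (fun ω => Real.exp (t * W i ω)) =
          fun ω => 1 + (Real.exp t - 1) * W i ω := by
        funext ω
        by_cases h : Z i ω ∈ C τ <;> simp [hW, h]
      rw [heq]
      have hWind : W i = (Z i ⁻¹' C τ).indicator (fun _ => (1:ℝ)) := by
        funext ω
        by_cases h : Z i ω ∈ C τ <;> simp [hW, h, Set.indicator_apply]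
      have hintW : Integrable (W i) P := by
        rw [hWind]
        exact (integrable_const (1:ℝ)).indicator ((hZmeas i) (hCmeas τ hτG))
      exact (integrable_const (1:ℝ)).add (hintW.const_mul _)
    have hWint_val : ∀ i : Fin (n+1), ∫ ω, W i ω ∂P = p := by
      intro i
      have hWind : W i = (Z i ⁻¹' C τ).indicator (fun _ => (1:ℝ)) := by
        funext ω
        by_cases h : Z i ω ∈ C τ <;> simp [hW, h, Set.indicator_apply]
      rw [hWind]
      have : ∫ ω, (Z i ⁻¹' C τ).indicator (fun _ => (1:ℝ)) ω ∂P
          = (P (Z i ⁻¹' C τ)).toReal := integral_indicator_one ((hZmeas i) (hCmeas τ hτG))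
      rw [this, hp]
      congr 1
      rw [← hZlaw i, Measure.map_apply (hZmeas i) (hCmeas τ hτG)]
    have hWmgf : ∀ (i : Fin (n+1)) (t : ℝ), mgf (W i) P t = 1 - p + p * Real.exp t := by
      intro i t
      have heq : (fun ω => Real.exp (t * W i ω)) =
          fun ω => 1 + (Real.exp t - 1) * W i ω := by
        funext ω
        by_cases h : Z i ω ∈ C τ <;> simp [hW, h]
      have hWind : W i = (Z i ⁻¹' C τ).indicator (fun _ => (1:ℝ)) := by
        funext ω
        by_cases h : Z i ω ∈ C τ <;> simp [hW, h, Set.indicator_apply]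
      have hintW : Integrable (W i) P := by
        rw [hWind]
        exact (integrable_const (1:ℝ)).indicator ((hZmeas i) (hCmeas τ hτG))
      rw [mgf, heq, integral_add (integrable_const 1) (hintW.const_mul _),
        integral_const, integral_const_mul, hWint_val i]
      simp
      ring
    set s : Finset (Fin (n+1)) :=
      Finset.univ.map ⟨Fin.castSucc, Fin.castSucc_injective n⟩ with hs
    have hscard : s.card = n := by simp [hs]
    have hsum : ∀ ω, (∑ i ∈ s, W i) ω =
        ((Finset.univ.filter (fun i : Fin n => Z i.castSucc ω ∈ C τ)).card : ℝ) := by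
      intro ω
      rw [Finset.sum_apply, hs, Finset.sum_map]
      simp only [Function.Embedding.coeFn_mk, hW]
      rw [Finset.sum_boole]
    have hsub : {ω | 1 - α ≤ phat τ ω} ⊆
        {ω | (s.card : ℝ) * (p + ε) ≤ (∑ i ∈ s, W i) ω} := by
      intro ω hω
      simp only [Set.mem_setOf_eq] at hω ⊢
      rw [hphat_count] at hω
      rw [hsum, hscard]
      have h1 : (1 - α) * (n : ℝ) ≤
          ((Finset.univ.filter (fun i : Fin n => Z i.castSucc ω ∈ C τ)).card : ℝ) :=
        (le_div_iff₀ hnpos).mp hω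
      nlinarith
    have htail := bernoulli_tail P W hWmeas hWindep s p hp0 hp1
      (fun i _ t => hWmgf i t) (fun i _ t => hWint i t) ε hε
    rw [hscard] at htail
    calc (P {ω | 1 - α ≤ phat τ ω}).toReal
        ≤ (P {ω | (s.card : ℝ) * (p + ε) ≤ (∑ i ∈ s, W i) ω}).toReal := by
          apply ENNReal.toReal_mono (measure_ne_top _ _) (measure_mono hsub)
      _ ≤ Real.exp (-2 * ε ^ 2 * n) := by rw [hscard] at *; exact htail
  -- union bound
  have hmono : P {ω | (μ (C (τhat ω))).toReal ≤ 1 - α - ε} ≤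
      ∑ τ ∈ Gbad, P {ω | 1 - α ≤ phat τ ω} :=
    le_trans (measure_mono hincl) (measure_biUnion_finset_le _ _)
  calc (P {ω | (μ (C (τhat ω))).toReal ≤ 1 - α - ε}).toReal
      ≤ (∑ τ ∈ Gbad, P {ω | 1 - α ≤ phat τ ω}).toReal := by
        apply ENNReal.toReal_mono _ hmono
        exact (ENNReal.sum_lt_top.mpr (fun τ _ => measure_lt_top _ _)).ne
    _ = ∑ τ ∈ Gbad, (P {ω | 1 - α ≤ phat τ ω}).toReal :=
        ENNReal.toReal_sum (fun τ _ => measure_ne_top _ _)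
    _ ≤ ∑ τ ∈ Gbad, Real.exp (-2 * ε ^ 2 * n) := Finset.sum_le_sum hτbound
    _ = Gbad.card * Real.exp (-2 * ε ^ 2 * n) := by rw [Finset.sum_const, nsmul_eq_mul]
    _ ≤ K * Real.exp (-2 * ε ^ 2 * n) := by
        apply mul_le_mul_of_nonneg_right _ (Real.exp_nonneg _)
        exact_mod_cast hGbadcard
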